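/- Let q = 2^m with m odd and m > 3. For any two distinct fixed elements x_1, x_2 ∈ F_q^*, the number of unordered pairs {x_3, x_4} of distinct elements of F_q^* \ {x_1, x_2} such that the 4×4 matrix with rows (1,1,1,1), (x_1,x_2,x_3,x_4), (x_1^3,...,x_4^3), (x_1^4,...,x_4^4) is singular equals (q-8)/2. -/

import Mathlib

theorem stmt12 (m : ℕ) (hm : 3 < m) (hmo : Odd m)
    (F : Type*) [Field F] [Fintype F] [DecidableEq F]
    (hF : Fintype.card F = 2 ^ m)
    (x₁ x₂ : F) (h1 : x₁ ≠ 0) (h2 : x₂ ≠ 0) (h12 : x₁ ≠ x₂) :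
    {s : Finset F | ∃ x₃ x₄ : F, s = {x₃, x₄} ∧ x₃ ≠ x₄ ∧
      x₃ ≠ 0 ∧ x₄ ≠ 0 ∧ x₃ ≠ x₁ ∧ x₃ ≠ x₂ ∧ x₄ ≠ x₁ ∧ x₄ ≠ x₂ ∧
      Matrix.det !![1, 1, 1, 1;
                    x₁, x₂, x₃, x₄;
                    x₁^3, x₂^3, x₃^3, x₄^3;
                    x₁^4, x₂^4, x₃^4, x₄^4] = 0}.ncard
      = (2 ^ m - 8) / 2 := by
  -- characteristic 2
  have hchar : ringChar F = 2 := by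
    rw [FiniteField.even_card_iff_char_two, hF, Nat.pow_mod]
    norm_num
    rw [Nat.zero_pow (by omega : 0 < m)]
  haveI : CharP F 2 := ringChar.of_eq hchar
  have h2z : (2 : F) = 0 := by
    have := CharP.cast_eq_zero F 2
    exact_mod_cast this
  -- cube map is injective
  have hcop : (Nat.card Fˣ).Coprime 3 := by
    have hcard : Nat.card Fˣ = 2 ^ m - 1 := by
      rw [Nat.card_units, Nat.card_eq_fintype_card, hF]
    have h4 : 2 ^ m % 3 = 2 := by
      obtain ⟨k, hk⟩ := hmo
      subst hk
      have : 2 ^ (2 * k + 1) = 4 ^ k * 2 := by rw [pow_succ, pow_mul]; norm_num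
      rw [this, Nat.mul_mod, Nat.pow_mod]
      norm_num
    have hge : 1 ≤ 2 ^ m := Nat.one_le_two_pow
    have hnd : ¬ (3 ∣ (2 ^ m - 1)) := by omega
    rw [hcard, Nat.coprime_comm]
    exact (Nat.prime_three).coprime_iff_not_dvd.mpr hnd
  have hcube : ∀ x y : F, x ^ 3 = y ^ 3 → x = y := by
    intro x y h
    rcases eq_or_ne y 0 with rfl | hy
    · simpa [pow_eq_zero_iff] using h
    rcases eq_or_ne x 0 with rfl | hx
    · exact absurd h.symm (by simpa [pow_eq_zero_iff] using hy)
    have hu : (Units.mk0 x hx) ^ 3 = (Units.mk0 y hy) ^ 3 := by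
      ext; simpa using h
    have := (powCoprime hcop).injective hu
    exact congrArg Units.val this
  have hkey : ∀ u v : F, u ≠ v → u ^ 2 + u * v + v ^ 2 ≠ 0 := by
    intro u v huv h
    exact huv (hcube u v (by linear_combination (u - v) * h))
  -- setup
  set a : F := x₁ + x₂ with ha
  set b : F := x₁ * x₂ with hb
  have hA : a ≠ 0 := fun h => h12 (by linear_combination h - x₂ * h2z)
  have hB : b ≠ 0 := mul_ne_zero h1 h2
  have hD : x₁ ^ 2 + x₁ * x₂ + x₂ ^ 2 ≠ 0 := hkey x₁ x₂ h12
  have hDab : a ^ 2 ≠ b := by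
    intro h
    exact hD (by linear_combination h)
  obtain ⟨r, hr⟩ : IsSquare b := FiniteField.isSquare_of_char_two hchar b
  have hRne : r ≠ 0 := by rintro rfl; exact hB (by rw [hr, mul_zero])
  set f : F → F := fun x => (a * x + b) / (x + a) with hf
  have hXA : ∀ x : F, x ≠ a → x + a ≠ 0 := by
    intro x h hx0
    exact h (by linear_combination hx0 - a * h2z)
  have heq : ∀ x : F, x ≠ a → f x * (x + a) = a * x + b := by
    intro x hx
    exact div_mul_cancel₀ _ (hXA x hx)
  -- the defining relation of f
  have hfR : ∀ x : F, x ≠ a → x * f x = b + a * x + a * f x := by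
    intro x hx
    linear_combination heq x hx - a * (f x) * h2z
  have hUniq : ∀ x y : F, x ≠ a → x * y = b + a * x + a * y → y = f x := by
    intro x y hx h
    have h0 : (y - f x) * (x + a) = 0 := by
      linear_combination h - heq x hx + a * y * h2z
    rcases mul_eq_zero.mp h0 with h' | h'
    · exact sub_eq_zero.mp h'
    · exact absurd h' (hXA x hx)
  have hfA : ∀ x : F, x ≠ a → f x ≠ a := by
    intro x hx h
    exact hDab (by linear_combination heq x hx - h * x - h * a)
  have hInv : ∀ x : F, x ≠ a → f (f x) = x := by
    intro x hx
    refine (hUniq (f x) x (hfA x hx) ?_).symm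
    linear_combination hfR x hx
  -- distinctness facts
  have d01 : (0:F) ≠ x₁ := Ne.symm h1
  have d02 : (0:F) ≠ x₂ := Ne.symm h2
  have d03 : (0:F) ≠ a := Ne.symm hA
  have d04 : (0:F) ≠ b / a := Ne.symm (div_ne_zero hB hA)
  have d05 : (0:F) ≠ x₁^2 / x₂ := Ne.symm (div_ne_zero (pow_ne_zero 2 h1) h2)
  have d06 : (0:F) ≠ x₂^2 / x₁ := Ne.symm (div_ne_zero (pow_ne_zero 2 h2) h1)
  have d07 : (0:F) ≠ r := Ne.symm hRne
  have d13 : x₁ ≠ a := fun h => h2 (by linear_combination - ha - h)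
  have d23 : x₂ ≠ a := fun h => h1 (by linear_combination - ha - h)
  have d14 : x₁ ≠ b / a := by
    intro h
    rw [eq_div_iff hA] at h
    exact h1 (pow_eq_zero_iff (n := 2) (by norm_num) |>.mp
      (by linear_combination h - x₁ * ha + hb))
  have d24 : x₂ ≠ b / a := by
    intro h
    rw [eq_div_iff hA] at h
    exact h2 (pow_eq_zero_iff (n := 2) (by norm_num) |>.mp
      (by linear_combination h - x₂ * ha + hb))
  have d15 : x₁ ≠ x₁^2 / x₂ := by
    intro h
    rw [eq_div_iff h2] at h
    exact h12 (mul_left_cancel₀ h1 (by linear_combination - h))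
  have d26 : x₂ ≠ x₂^2 / x₁ := by
    intro h
    rw [eq_div_iff h1] at h
    exact h12 (mul_left_cancel₀ h2 (by linear_combination - h)).symm
  have sq_cancel : ∀ u v : F, (u - v)^2 = 0 → u = v := by
    intro u v h
    exact sub_eq_zero.mp (pow_eq_zero_iff (n := 2) (by norm_num) |>.mp h)
  have d16 : x₁ ≠ x₂^2 / x₁ := by
    intro h
    rw [eq_div_iff h1] at h
    exact h12 (sq_cancel x₁ x₂ (by linear_combination h + (x₂^2 - x₁*x₂) * h2z))
  have d25 : x₂ ≠ x₁^2 / x₂ := by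
    intro h
    rw [eq_div_iff h2] at h
    exact h12 (sq_cancel x₁ x₂ (by linear_combination - h + (x₂^2 - x₁*x₂) * h2z))
  have d17 : x₁ ≠ r := by
    intro h
    apply h12
    exact mul_left_cancel₀ h1 (by linear_combination (x₁ + r) * h + hr - hb + (r^2 - x₁*x₂) * h2z)
  have d27 : x₂ ≠ r := by
    intro h
    apply h12
    exact (mul_left_cancel₀ h2 (by linear_combination - (x₂ + r) * h - hr + hb + (x₂^2 - r^2) * h2z)).symm
  have d34 : a ≠ b / a := by
    intro h
    rw [eq_div_iff hA] at h
    exact hDab (by linear_combination h)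
  have d37 : a ≠ r := by
    intro h
    exact hDab (by linear_combination (a + r) * h + hr + (r^2 - x₁*x₂) * h2z)
  have d35 : a ≠ x₁^2 / x₂ := by
    intro h
    rw [eq_div_iff h2] at h
    exact hD (by linear_combination - h + x₂ * ha + x₁ * x₂ * h2z + x₂^2 * h2z)
  have d36 : a ≠ x₂^2 / x₁ := by
    intro h
    rw [eq_div_iff h1] at h
    exact hD (by linear_combination - h + x₁ * ha + x₁ * x₂ * h2z + x₁^2 * h2z)
  have d45 : b / a ≠ x₁^2 / x₂ := by
    intro h
    rw [div_eq_div_iff hA h2] at h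
    apply hD
    have hx : x₁ * (x₁ ^ 2 + x₁ * x₂ + x₂ ^ 2) = 0 := by
      linear_combination - h - x₁^2 * ha + x₂ * hb + x₁*x₂^2*h2z
    exact (mul_eq_zero.mp hx).resolve_left h1
  have d46 : b / a ≠ x₂^2 / x₁ := by
    intro h
    rw [div_eq_div_iff hA h1] at h
    apply hD
    have hx : x₂ * (x₁ ^ 2 + x₁ * x₂ + x₂ ^ 2) = 0 := by
      linear_combination - h - x₂^2 * ha + x₁ * hb + x₁^2*x₂*h2z
    exact (mul_eq_zero.mp hx).resolve_left h2
  have d47 : b / a ≠ r := by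
    intro h
    rw [div_eq_iff hA] at h
    apply hDab
    exact (mul_left_cancel₀ hB (by linear_combination (b + r*a) * h - a^2 * hr)).symm
  have d56 : x₁^2 / x₂ ≠ x₂^2 / x₁ := by
    intro h
    rw [div_eq_div_iff h2 h1] at h
    exact h12 (hcube x₁ x₂ (by linear_combination h))
  have d57 : x₁^2 / x₂ ≠ r := by
    intro h
    rw [div_eq_iff h2] at h
    apply h12
    apply hcube x₁ x₂
    refine mul_left_cancel₀ h1 ?_
    linear_combination (x₁^2 + r * x₂) * h + x₂^2 * hr - x₂^2 * hb + (r^2*x₂^2 - x₁*x₂^3) * h2z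
  have d67 : x₂^2 / x₁ ≠ r := by
    intro h
    rw [div_eq_iff h1] at h
    apply h12
    apply (hcube x₂ x₁ ?_).symm
    refine mul_left_cancel₀ h2 ?_
    linear_combination (x₂^2 + r * x₁) * h + x₁^2 * hr - x₁^2 * hb + (r^2*x₁^2 - x₂*x₁^3) * h2z
  -- special values of f
  have hfba : f (b / a) = 0 := by
    refine (hUniq (b / a) 0 (Ne.symm d34) ?_).symm
    field_simp
    linear_combination - (x₁*x₂^2 + x₁^2*x₂)*h2z
  have hf12 : f (x₁^2 / x₂) = x₁ := by
    refine (hUniq (x₁^2 / x₂) x₁ (Ne.symm d35) ?_).symm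
    field_simp
    linear_combination - (x₁*x₂^2 + x₁^2*x₂) * h2z
  have hf21 : f (x₂^2 / x₁) = x₂ := by
    refine (hUniq (x₂^2 / x₁) x₂ (Ne.symm d36) ?_).symm
    field_simp
    linear_combination - (x₂*x₁^2 + x₂^2*x₁) * h2z
  have hfr : f r = r := by
    refine (hUniq r r (Ne.symm d37) ?_).symm
    linear_combination - hr - a * r * h2z
  have hfx1 : f x₁ = x₁^2 / x₂ := by
    conv_lhs => rw [← hf12]
    exact hInv _ (Ne.symm d35)
  have hfx2 : f x₂ = x₂^2 / x₁ := by
    conv_lhs => rw [← hf21]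
    exact hInv _ (Ne.symm d36)
  have hfix : ∀ x : F, x ≠ a → f x = x → x = r := by
    intro x hx h
    have h3 := hfR x hx
    rw [h] at h3
    exact sq_cancel x r (by linear_combination h3 + hr + (a*x + r^2 - x*r) * h2z)
  -- the excluded finset
  set E : Finset F := {0, x₁, x₂, a, b / a, x₁^2 / x₂, x₂^2 / x₁, r} with hE
  have hEcard : E.card = 8 := by
    rw [hE]
    rw [Finset.card_insert_of_notMem (by
      simp only [Finset.mem_insert, Finset.mem_singleton]; push_neg
      exact ⟨d01, d02, d03, d04, d05, d06, d07⟩)]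
    rw [Finset.card_insert_of_notMem (by
      simp only [Finset.mem_insert, Finset.mem_singleton]; push_neg
      exact ⟨h12, d13, d14, d15, d16, d17⟩)]
    rw [Finset.card_insert_of_notMem (by
      simp only [Finset.mem_insert, Finset.mem_singleton]; push_neg
      exact ⟨d23, d24, d25, d26, d27⟩)]
    rw [Finset.card_insert_of_notMem (by
      simp only [Finset.mem_insert, Finset.mem_singleton]; push_neg
      exact ⟨d34, d35, d36, d37⟩)]
    rw [Finset.card_insert_of_notMem (by
      simp only [Finset.mem_insert, Finset.mem_singleton]; push_neg
      exact ⟨d45, d46, d47⟩)]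
    rw [Finset.card_insert_of_notMem (by
      simp only [Finset.mem_insert, Finset.mem_singleton]; push_neg
      exact ⟨d56, d57⟩)]
    rw [Finset.card_insert_of_notMem (by simp only [Finset.mem_singleton]; exact d67)]
    rw [Finset.card_singleton]
  set T : Finset F := Finset.univ \ E with hT
  have hTcard : T.card = 2^m - 8 := by
    rw [hT, Finset.card_sdiff_of_subset (Finset.subset_univ E), Finset.card_univ, hF, hEcard]
  have hmemT : ∀ x : F, x ∈ T ↔ (x ≠ 0 ∧ x ≠ x₁ ∧ x ≠ x₂ ∧ x ≠ a ∧ x ≠ b / a ∧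
      x ≠ x₁^2 / x₂ ∧ x ≠ x₂^2 / x₁ ∧ x ≠ r) := by
    intro x
    simp [hT, hE, not_or]
  -- f maps T to T
  have hTmaps : ∀ x : F, x ∈ T → f x ∈ T := by
    intro x hx
    obtain ⟨e0, e1, e2, e3, e4, e5, e6, e7⟩ := (hmemT x).mp hx
    have hinv := hInv x e3
    rw [hmemT]
    refine ⟨?_, ?_, ?_, hfA x e3, ?_, ?_, ?_, ?_⟩
    · intro h0
      apply e4
      rw [eq_div_iff hA]
      have h3 := heq x e3
      rw [h0] at h3
      linear_combination - h3 - b * h2z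
    · intro h0; rw [h0] at hinv; rw [hfx1] at hinv; exact e5 hinv.symm
    · intro h0; rw [h0] at hinv; rw [hfx2] at hinv; exact e6 hinv.symm
    · intro h0; rw [h0] at hinv; rw [hfba] at hinv; exact e0 hinv.symm
    · intro h0; rw [h0] at hinv; rw [hf12] at hinv; exact e1 hinv.symm
    · intro h0; rw [h0] at hinv; rw [hf21] at hinv; exact e2 hinv.symm
    · intro h0; rw [h0] at hinv; rw [hfr] at hinv; exact e7 hinv.symm
  have hfneT : ∀ x : F, x ∈ T → f x ≠ x := by
    intro x hx h
    obtain ⟨e0, e1, e2, e3, e4, e5, e6, e7⟩ := (hmemT x).mp hx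
    exact e7 (hfix x e3 h)
  -- determinant identity
  have hdetId : ∀ u v : F, Matrix.det !![1, 1, 1, 1;
      x₁, x₂, u, v; x₁^3, x₂^3, u^3, v^3; x₁^4, x₂^4, u^4, v^4] =
      (x₂-x₁)*(u-x₁)*(v-x₁)*(u-x₂)*(v-x₂)*(v-u) *
        (x₁*x₂+x₁*u+x₁*v+x₂*u+x₂*v+u*v) := by
    intro u v
    simp [Matrix.det_succ_row_zero, Fin.sum_univ_succ, Matrix.det_fin_three,
      Fin.succAbove, Matrix.cons_val_succ, Fin.castSucc, Fin.castAdd, Fin.castLE]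
    ring
  -- the finset of pairs
  set P : Finset (Finset F) := T.image (fun x => ({x, f x} : Finset F)) with hP
  have hSet : {s : Finset F | ∃ x₃ x₄ : F, s = {x₃, x₄} ∧ x₃ ≠ x₄ ∧
      x₃ ≠ 0 ∧ x₄ ≠ 0 ∧ x₃ ≠ x₁ ∧ x₃ ≠ x₂ ∧ x₄ ≠ x₁ ∧ x₄ ≠ x₂ ∧
      Matrix.det !![1, 1, 1, 1;
                    x₁, x₂, x₃, x₄;
                    x₁^3, x₂^3, x₃^3, x₄^3;
                    x₁^4, x₂^4, x₃^4, x₄^4] = 0} = ↑P := by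
    ext s
    simp only [Set.mem_setOf_eq, Finset.coe_image, Set.mem_image, Finset.mem_coe, hP,
      Finset.mem_image]
    constructor
    · rintro ⟨x₃, x₄, rfl, h34, h30, h40, h31, h32, h41, h42, hdet⟩
      have hVne : (x₂-x₁)*(x₃-x₁)*(x₄-x₁)*(x₃-x₂)*(x₄-x₂)*(x₄-x₃) ≠ 0 := by
        refine mul_ne_zero (mul_ne_zero (mul_ne_zero (mul_ne_zero (mul_ne_zero ?_ ?_) ?_) ?_) ?_) ?_ <;>
          exact sub_ne_zero.mpr (by first | exact h12.symm | assumption | exact h34.symm)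
      rw [hdetId x₃ x₄] at hdet
      have he2 : x₁*x₂+x₁*x₃+x₁*x₄+x₂*x₃+x₂*x₄+x₃*x₄ = 0 :=
        (mul_eq_zero.mp hdet).resolve_left hVne
      have hrel : x₃ * x₄ = b + a * x₃ + a * x₄ := by
        linear_combination he2 - hb - x₃ * ha - x₄ * ha - (x₁*x₂ + x₁*x₃ + x₁*x₄ + x₂*x₃ + x₂*x₄) * h2z
      have hx3a : x₃ ≠ a := by
        intro h
        rw [h] at hrel
        exact hDab (by linear_combination - hrel + a * x₄ * h2z - (x₁*x₂ + x₁*x₄ + x₂*x₄) * h2z)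
      have hx4 : x₄ = f x₃ := hUniq x₃ x₄ hx3a hrel
      have hx3T : x₃ ∈ T := by
        rw [hmemT]
        refine ⟨h30, h31, h32, hx3a, ?_, ?_, ?_, ?_⟩
        · intro h; rw [h, hfba] at hx4; exact h40 hx4
        · intro h; rw [h, hf12] at hx4; exact h41 hx4
        · intro h; rw [h, hf21] at hx4; exact h42 hx4
        · intro h; rw [h, hfr] at hx4; rw [← h] at hx4; exact h34 hx4.symm
      exact ⟨x₃, hx3T, by rw [hx4]⟩
    · rintro ⟨x, hxT, rfl⟩
      obtain ⟨e0, e1, e2, e3, e4, e5, e6, e7⟩ := (hmemT x).mp hxT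
      obtain ⟨g0, g1, g2, g3, g4, g5, g6, g7⟩ := (hmemT (f x)).mp (hTmaps x hxT)
      refine ⟨x, f x, rfl, (hfneT x hxT).symm, e0, g0, e1, e2, g1, g2, ?_⟩
      rw [hdetId x (f x)]
      have he2 : x₁*x₂+x₁*x+x₁*(f x)+x₂*x+x₂*(f x)+x*(f x) = 0 := by
        linear_combination hfR x e3 + hb + x * ha + (f x) * ha +
          (x₁*x₂ + x₁*x + x₁*(f x) + x₂*x + x₂*(f x)) * h2z
      rw [he2, mul_zero]
  -- counting : P.biUnion id = T
  have hbU : P.biUnion id = T := by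
    ext z
    simp only [Finset.mem_biUnion, id_eq, hP, Finset.mem_image]
    constructor
    · rintro ⟨p, ⟨x, hxT, rfl⟩, hz⟩
      rcases Finset.mem_insert.mp hz with rfl | hz
      · exact hxT
      · rw [Finset.mem_singleton.mp hz]; exact hTmaps x hxT
    · intro hz
      exact ⟨{z, f z}, ⟨z, hz, rfl⟩, Finset.mem_insert_self _ _⟩
  have hdisj : ∀ p ∈ P, ∀ q ∈ P, p ≠ q → Disjoint (id p) (id q) := by
    intro p hp q hq hne
    rw [hP, Finset.mem_image] at hp hq
    obtain ⟨x, hxT, rfl⟩ := hp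
    obtain ⟨y, hyT, rfl⟩ := hq
    rw [Finset.disjoint_left]
    intro z hzp hzq
    have hxa : x ≠ a := ((hmemT x).mp hxT).2.2.2.1
    have hya : y ≠ a := ((hmemT y).mp hyT).2.2.2.1
    apply hne
    have hz1 : z = x ∨ z = f x := by simpa using hzp
    have hz2 : z = y ∨ z = f y := by simpa using hzq
    rcases hz1 with hz1 | hz1 <;> rcases hz2 with hz2 | hz2
    · rw [hz1.symm.trans hz2]
    · have hxy : x = f y := hz1.symm.trans hz2
      rw [hxy, hInv y hya]
      exact Finset.pair_comm _ _
    · have hxy : f x = y := hz1.symm.trans hz2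
      rw [← hxy, hInv x hxa]
      exact Finset.pair_comm _ _
    · have hff : f x = f y := hz1.symm.trans hz2
      have hxy : x = y := by
        have := congrArg f hff
        rwa [hInv x hxa, hInv y hya] at this
      rw [hxy]
  have hsum : T.card = ∑ p ∈ P, (id p).card := by
    rw [← hbU]
    exact Finset.card_biUnion hdisj
  have hsum2 : ∀ p ∈ P, (id p).card = 2 := by
    intro p hp
    rw [hP, Finset.mem_image] at hp
    obtain ⟨x, hxT, rfl⟩ := hp
    exact Finset.card_pair (Ne.symm (hfneT x hxT))
  have hTP : T.card = 2 * P.card := by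
    rw [hsum, Finset.sum_congr rfl hsum2, Finset.sum_const, smul_eq_mul, mul_comm]
  rw [hSet, Set.ncard_coe_finset]
  have h16 : 16 ≤ 2 ^ m := by
    calc (16:ℕ) = 2 ^ 4 := by norm_num
    _ ≤ 2 ^ m := Nat.pow_le_pow_right (by norm_num) (by omega)
  obtain ⟨Q, hQ⟩ : ∃ Q, 2 ^ m = Q := ⟨_, rfl⟩
  rw [hQ] at hTcard h16 ⊢
  omega
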